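/- Let M be an n-dimensional compact Riemannian manifold with nonnegative Ricci curvature. Then for every p ∈ M, ∫_M d(p,x) dvol > c(n) · diam(M) · Vol(M), where c(n) = (1 − 1/(n+1))^n · 1/(2^{n+1}(n+1)) = (n/(n+1))^n / (2^{n+1}(n+1)). -/

import Mathlib

open MeasureTheory Metric

/-- Theorem 1.1: Let `M` be an `n`-dimensional compact Riemannian
manifold with nonnegative Ricci curvature (encoded, as Mathlib has no Riemannian
curvature, by the Euclidean Bishop–Gromov monotonicity of `r ↦ μ(B_p(r))/r^n`),
with positive volume and at least two points.  Then for every `p`,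
`∫ d(p,x) dvol > c(n) · diam(M) · Vol(M)` with
`c(n) = (n/(n+1))^n / (2^{n+1}(n+1))`. -/
theorem integral_dist_gt_of_nonneg_ricci
    {M : Type*} [MetricSpace M] [CompactSpace M] [Nontrivial M]
    [MeasurableSpace M] [OpensMeasurableSpace M]
    (μ : Measure M) [IsFiniteMeasure μ] (hμ : μ Set.univ ≠ 0)
    (n : ℕ) (hn : 1 ≤ n)
    (hBG : ∀ (p : M) (r R : ℝ), 0 < r → r ≤ R →
      μ (Metric.ball p R) * ENNReal.ofReal (r ^ n) ≤
        μ (Metric.ball p r) * ENNReal.ofReal (R ^ n))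
    (p : M) :
    ((n : ℝ) / (n + 1)) ^ n / (2 ^ (n + 1) * (n + 1)) *
        Metric.diam (Set.univ : Set M) * (μ Set.univ).toReal <
      ∫ x, dist p x ∂μ := by
  set d : ℝ := Metric.diam (Set.univ : Set M) with hd
  -- there exist two points realizing the diameter
  obtain ⟨⟨a, b⟩, -, hab⟩ := (isCompact_univ (X := M × M)).exists_isMaxOn
    (Set.univ_nonempty) ((continuous_dist.comp (continuous_fst.prodMk continuous_snd)).continuousOn
      (s := Set.univ) : ContinuousOn (fun z : M × M => dist z.1 z.2) Set.univ)
  have hdle : d ≤ dist a b := by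
    apply Metric.diam_le_of_forall_dist_le dist_nonneg
    intro x _ y _
    exact hab (Set.mem_univ ((x, y) : M × M))
  have hbd : ∀ x y : M, dist x y ≤ d := fun x y =>
    Metric.dist_le_diam_of_mem isCompact_univ.isBounded (Set.mem_univ x) (Set.mem_univ y)
  obtain ⟨x0, y0, hxy⟩ := exists_pair_ne M
  have hdpos : 0 < d := lt_of_lt_of_le (dist_pos.2 hxy) (hbd x0 y0)
  -- choose q with dist p q ≥ d/2
  have : d / 2 ≤ dist p a ∨ d / 2 ≤ dist p b := by
    by_contra h
    push_neg at h
    have := dist_triangle a p b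
    rw [dist_comm a p] at this
    linarith [hdle]
  obtain ⟨q, hq⟩ : ∃ q : M, d / 2 ≤ dist p q := this.elim (fun h => ⟨a, h⟩) fun h => ⟨b, h⟩
  set r : ℝ := n * d / (2 * (n + 1)) with hr
  have hn1 : (1 : ℝ) ≤ n := by exact_mod_cast hn
  have hnp : (0 : ℝ) < n + 1 := by linarith
  have hrpos : 0 < r := by positivity
  have hrd : r < d / 2 := by
    rw [hr, div_lt_div_iff₀ (by positivity) (by norm_num)]
    nlinarith
  set V : ℝ := (μ Set.univ).toReal with hV
  have hVpos : 0 < V := ENNReal.toReal_pos hμ (measure_ne_top μ _)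
  -- Step A : μ (ball q r) ≥ (r/d)^n * μ univ
  have hA : V * r ^ n ≤ (μ (Metric.ball q r)).toReal * d ^ n := by
    have key : ∀ R : ℝ, d < R → V * r ^ n ≤ (μ (Metric.ball q r)).toReal * R ^ n := by
      intro R hR
      have huniv : Metric.ball q R = Set.univ := by
        ext x
        simp only [Metric.mem_ball, Set.mem_univ, iff_true]
        exact lt_of_le_of_lt (by rw [dist_comm]; exact hbd q x) hR
      have := hBG q r R hrpos (le_of_lt (lt_trans (lt_trans hrd (by linarith)) hR))
      rw [huniv] at this
      have h2 := ENNReal.toReal_mono (by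
        exact ENNReal.mul_ne_top (measure_ne_top μ _) ENNReal.ofReal_ne_top) this
      rw [ENNReal.toReal_mul, ENNReal.toReal_mul, ENNReal.toReal_ofReal (pow_nonneg hrpos.le n),
        ENNReal.toReal_ofReal (pow_nonneg (le_trans hdpos.le hR.le) n)] at h2
      exact h2
    have hcont : Filter.Tendsto (fun R : ℝ => (μ (Metric.ball q r)).toReal * R ^ n)
        (nhdsWithin d (Set.Ioi d)) (nhds ((μ (Metric.ball q r)).toReal * d ^ n)) := by
      exact ((continuous_const.mul (continuous_pow n)).tendsto d).mono_left
        nhdsWithin_le_nhds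
    exact ge_of_tendsto hcont (Filter.eventually_of_mem self_mem_nhdsWithin fun R hR => key R hR)
  have hBpos : 0 < (μ (Metric.ball q r)).toReal := by
    nlinarith [pow_pos hrpos n, pow_pos hdpos n]
  -- The superlevel set
  set S : Set M := {x | d / 2 - r < dist p x} with hS
  have hsub : Metric.ball q r ⊆ S := by
    intro x hx
    simp only [Metric.mem_ball] at hx
    have h3 := dist_triangle p x q
    simp only [hS, Set.mem_setOf_eq]
    linarith [hq]
  have hSμ : (μ (Metric.ball q r)).toReal ≤ (μ S).toReal :=
    ENNReal.toReal_mono (measure_ne_top μ S) (measure_mono (μ := μ) hsub)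
  have hSne : μ S ≠ 0 := by
    intro h0
    have : μ (Metric.ball q r) ≤ μ S := measure_mono hsub
    rw [h0, le_zero_iff] at this
    rw [this] at hBpos
    simp at hBpos
  -- integrability
  have hint : Integrable (fun x => dist p x) μ := by
    have : Continuous (fun x : M => dist p x) := continuous_const.dist continuous_id
    exact this.integrable_of_hasCompactSupport (HasCompactSupport.of_compactSpace _)
  have hstrict := setIntegral_gt_gt (R := d / 2 - r) (f := fun x => dist p x)
    (by linarith) hint.integrableOn hSne
  have htotal : ∫ x in S, dist p x ∂μ ≤ ∫ x, dist p x ∂μ :=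
    setIntegral_le_integral hint (Filter.Eventually.of_forall fun x => dist_nonneg)
  -- final arithmetic
  have hchain : ((n : ℝ) / (n + 1)) ^ n / (2 ^ (n + 1) * (n + 1)) * d * V ≤
      (μ S).toReal * (d / 2 - r) := by
    have h1 : ((n : ℝ) / (n + 1)) ^ n / (2 ^ (n + 1) * (n + 1)) * d * V
        = (V * r ^ n / d ^ n) * (d / 2 - r) := by
      have e1 : d / 2 - r = d / (2 * (n + 1)) := by rw [hr]; field_simp; ring
      have e2 : r ^ n = (n : ℝ) ^ n * d ^ n / (2 ^ n * ((n : ℝ) + 1) ^ n) := by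
        rw [hr, div_pow, mul_pow, mul_pow]
      rw [e1, e2, div_pow, pow_succ]
      have h2n : (2 : ℝ) ^ n ≠ 0 := by positivity
      have hnn : ((n : ℝ) + 1) ^ n ≠ 0 := by positivity
      have hdn : (d : ℝ) ^ n ≠ 0 := by positivity
      field_simp
    rw [h1]
    have h2 : V * r ^ n / d ^ n ≤ (μ S).toReal := by
      rw [div_le_iff₀ (pow_pos hdpos n)]
      calc V * r ^ n ≤ (μ (Metric.ball q r)).toReal * d ^ n := hA
        _ ≤ (μ S).toReal * d ^ n := by
            exact mul_le_mul_of_nonneg_right hSμ (le_of_lt (pow_pos hdpos n))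
    exact mul_le_mul_of_nonneg_right h2 (by linarith)
  calc ((n : ℝ) / (n + 1)) ^ n / (2 ^ (n + 1) * (n + 1)) * d * V
      ≤ (μ S).toReal * (d / 2 - r) := hchain
    _ < ∫ x in S, dist p x ∂μ := hstrict
    _ ≤ ∫ x, dist p x ∂μ := htotal
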